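/- For every s ∈ (0,1], t ∈ [0,2], and every prime p, there exists a set of lines L in F_p^2 with #L ≥ (1/2)p^t and for each L ∈ L a subset Y(L) ⊆ L with #Y(L) ≥ (1/2)p^s, such that the union E = ⋃_{L∈L} Y(L) satisfies #E ≤ C·p^{min{s+t, (3/2)s+(1/2)t, s+1}} for a constant C independent of p. -/

import Mathlib

def lineF (p : ℕ) (m c : ZMod p) : AffineSubspace (ZMod p) (Fin 2 → ZMod p) where
  carrier := {z | z 1 = m * z 0 + c}
  smul_vsub_vadd_mem' := by
    intro a p1 p2 p3 h1 h2 h3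
    simp only [Set.mem_setOf_eq] at *
    show (a • (p1 -ᵥ p2) +ᵥ p3) 1 = m * ((a • (p1 -ᵥ p2) +ᵥ p3) 0) + c
    simp only [vsub_eq_sub, vadd_eq_add, Pi.add_apply, Pi.smul_apply, Pi.sub_apply,
      smul_eq_mul, h1, h2, h3]
    ring

lemma mem_lineF {p : ℕ} {m c : ZMod p} {z : Fin 2 → ZMod p} :
    z ∈ lineF p m c ↔ z 1 = m * z 0 + c := Iff.rfl

lemma lineF_nonempty (p : ℕ) (m c : ZMod p) : ((lineF p m c : Set (Fin 2 → ZMod p))).Nonempty :=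
  ⟨![0, c], by simp [mem_lineF]⟩

lemma direction_lineF (p : ℕ) (m c : ZMod p) :
    (lineF p m c).direction = Submodule.span (ZMod p) {![1, m]} := by
  apply le_antisymm
  · intro v hv
    rw [AffineSubspace.mem_direction_iff_eq_vsub (lineF_nonempty p m c)] at hv
    obtain ⟨p1, h1, p2, h2, rfl⟩ := hv
    rw [mem_lineF] at h1 h2
    have hv : p1 -ᵥ p2 = (p1 0 - p2 0) • ![1, m] := by
      funext i
      fin_cases i <;>
        simp [vsub_eq_sub, h1, h2] <;> ring
    rw [hv]
    exact Submodule.smul_mem _ _ (Submodule.mem_span_singleton_self _)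
  · rw [Submodule.span_le]
    intro v hv
    rw [Set.mem_singleton_iff] at hv
    subst hv
    have h1 : (![1, m + c] : Fin 2 → ZMod p) ∈ lineF p m c := by
      rw [mem_lineF]; simp [mul_one]
    have h2 : (![0, c] : Fin 2 → ZMod p) ∈ lineF p m c := by simp [mem_lineF]
    have he : (![1, m] : Fin 2 → ZMod p) = ![1, m + c] -ᵥ ![0, c] := by
      funext i; fin_cases i <;> simp [vsub_eq_sub]
    rw [SetLike.mem_coe, he]
    exact AffineSubspace.vsub_mem_direction h1 h2

lemma finrank_lineF (p : ℕ) (hp : p.Prime) (m c : ZMod p) :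
    Module.finrank (ZMod p) (lineF p m c).direction = 1 := by
  haveI : Fact p.Prime := ⟨hp⟩
  rw [direction_lineF, finrank_span_singleton]
  intro h
  have := congrFun h 0
  simp at this

lemma lineF_inj (p : ℕ) {m c m' c' : ZMod p} (h : lineF p m c = lineF p m' c') :
    m = m' ∧ c = c' := by
  have h0 : (![0, c] : Fin 2 → ZMod p) ∈ lineF p m c := by simp [mem_lineF]
  have h0' := h ▸ h0
  rw [mem_lineF] at h0'
  simp at h0'
  have h1 : (![1, m + c] : Fin 2 → ZMod p) ∈ lineF p m c := by rw [mem_lineF]; simp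
  have h1' := h ▸ h1
  rw [mem_lineF] at h1'
  simp at h1'
  constructor
  · have : m + c = m' + c' := by simpa using h1'
    rw [h0'] at this
    exact add_right_cancel this
  · exact h0'

open Set in
lemma key (p : ℕ) (hp : p.Prime) (Mn Cn Xn : ℕ)
    (hM1 : 1 ≤ Mn) (hMp : Mn ≤ p) (hC1 : 1 ≤ Cn) (hCp : Cn ≤ p)
    (hX1 : 1 ≤ Xn) (hXp : Xn ≤ p) :
    ∃ (𝓛 : Set (AffineSubspace (ZMod p) (Fin 2 → ZMod p)))
      (Y : AffineSubspace (ZMod p) (Fin 2 → ZMod p) → Set (Fin 2 → ZMod p)),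
      (∀ L ∈ 𝓛, (L : Set (Fin 2 → ZMod p)).Nonempty ∧
          Module.finrank (ZMod p) L.direction = 1) ∧
      Mn * Cn ≤ Nat.card 𝓛 ∧
      (∀ L ∈ 𝓛, Y L ⊆ (L : Set (Fin 2 → ZMod p)) ∧ Xn ≤ Nat.card (Y L)) ∧
      Nat.card (⋃ L ∈ 𝓛, Y L) ≤ Xn * min p ((Mn - 1) * (Xn - 1) + Cn) := by
  haveI : Fact p.Prime := ⟨hp⟩
  set Bn : ℕ := (Mn - 1) * (Xn - 1) + Cn with hBn
  set Xset : Set (ZMod p) := (Nat.cast : ℕ → ZMod p) '' Iio Xn with hXset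
  set Sset : Set (ZMod p) := (Nat.cast : ℕ → ZMod p) '' Iio Bn with hSset
  refine ⟨(fun q : ℕ × ℕ => lineF p q.1 q.2) '' (Iio Mn ×ˢ Iio Cn),
    fun L => {z | z ∈ L ∧ z 0 ∈ Xset ∧ z 1 ∈ Sset}, ?_, ?_, ?_, ?_⟩
  · rintro L ⟨⟨m, c⟩, -, rfl⟩
    exact ⟨lineF_nonempty p _ _, finrank_lineF p hp _ _⟩
  · -- card of 𝓛
    have hfin : ((fun q : ℕ × ℕ => lineF p (q.1 : ZMod p) (q.2 : ZMod p)) ''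
        (Iio Mn ×ˢ Iio Cn)).Finite :=
      (Set.toFinite _).image _
    haveI := hfin.to_subtype
    have hinj : Function.Injective (fun q : Fin Mn × Fin Cn =>
        (⟨lineF p (q.1 : ℕ) (q.2 : ℕ),
          ⟨((q.1 : ℕ), (q.2 : ℕ)), ⟨q.1.isLt, q.2.isLt⟩, rfl⟩⟩ :
          ((fun q : ℕ × ℕ => lineF p q.1 q.2) '' (Iio Mn ×ˢ Iio Cn)))) := by
      rintro ⟨a, b⟩ ⟨a', b'⟩ h
      simp only [Subtype.mk.injEq] at h
      obtain ⟨hm, hc⟩ := lineF_inj p (Subtype.ext_iff.mp h)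
      have ha : (a : ℕ) = (a' : ℕ) := by
        rw [← ZMod.val_cast_of_lt (lt_of_lt_of_le a.isLt hMp),
          ← ZMod.val_cast_of_lt (lt_of_lt_of_le a'.isLt hMp), hm]
      have hb : (b : ℕ) = (b' : ℕ) := by
        rw [← ZMod.val_cast_of_lt (lt_of_lt_of_le b.isLt hCp),
          ← ZMod.val_cast_of_lt (lt_of_lt_of_le b'.isLt hCp), hc]
      ext
      · exact ha
      · exact hb
    have hcard := Nat.card_le_card_of_injective _ hinj
    calc Mn * Cn = Nat.card (Fin Mn × Fin Cn) := by simp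
      _ ≤ _ := hcard
  · -- Y L properties
    rintro L ⟨⟨m, c⟩, ⟨hm, hc⟩, rfl⟩
    simp only [mem_Iio] at hm hc
    refine ⟨fun z hz => hz.1, ?_⟩
    have hinj : Function.Injective (fun i : Fin Xn =>
        (⟨![((i : ℕ) : ZMod p), (m : ZMod p) * ((i : ℕ) : ZMod p) + (c : ZMod p)], by
          refine ⟨?_, ?_, ?_⟩
          · rw [mem_lineF]
            simp [Matrix.cons_val_one, Matrix.head_cons, Matrix.cons_val_zero]
          · exact ⟨(i : ℕ), i.isLt, by simp⟩
          · refine ⟨m * (i : ℕ) + c, ?_, by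
              simp only [Matrix.cons_val_one, Matrix.head_cons]; push_cast; ring⟩
            have h1 : m * (i : ℕ) ≤ (Mn - 1) * (Xn - 1) :=
              Nat.mul_le_mul (by omega) (by omega)
            simp only [mem_Iio, hBn]
            omega⟩ :
          {z : Fin 2 → ZMod p | z ∈ lineF p (m : ZMod p) (c : ZMod p) ∧
            z 0 ∈ Xset ∧ z 1 ∈ Sset})) := by
      intro i j h
      simp only [Subtype.mk.injEq] at h
      have h0 := congrFun h 0
      simp only [Matrix.cons_val_zero] at h0
      have : (i : ℕ) = (j : ℕ) := by
        rw [← ZMod.val_cast_of_lt (lt_of_lt_of_le i.isLt hXp),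
          ← ZMod.val_cast_of_lt (lt_of_lt_of_le j.isLt hXp), h0]
      exact Fin.ext this
    haveI : Finite {z : Fin 2 → ZMod p | z ∈ lineF p (m : ZMod p) (c : ZMod p) ∧
        z 0 ∈ Xset ∧ z 1 ∈ Sset} := Subtype.finite
    have := Nat.card_le_card_of_injective _ hinj
    exact (by simp : Xn = Nat.card (Fin Xn)).le.trans this
  · -- union bound
    set T : Set (Fin 2 → ZMod p) := {z | z 0 ∈ Xset ∧ z 1 ∈ Sset} with hT
    have hsub : (⋃ L ∈ (fun q : ℕ × ℕ => lineF p (q.1 : ZMod p) (q.2 : ZMod p)) ''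
        (Iio Mn ×ˢ Iio Cn), {z : Fin 2 → ZMod p | z ∈ L ∧ z 0 ∈ Xset ∧ z 1 ∈ Sset}) ⊆ T := by
      intro z hz
      simp only [mem_iUnion] at hz
      obtain ⟨L, -, hz1, hz2⟩ := hz
      exact hz2
    have h1 : Nat.card (⋃ L ∈ (fun q : ℕ × ℕ => lineF p (q.1 : ZMod p) (q.2 : ZMod p)) ''
        (Iio Mn ×ˢ Iio Cn), {z : Fin 2 → ZMod p | z ∈ L ∧ z 0 ∈ Xset ∧ z 1 ∈ Sset})
        ≤ Nat.card T := by
      rw [Nat.card_coe_set_eq, Nat.card_coe_set_eq]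
      exact Set.ncard_le_ncard hsub (Set.toFinite T)
    refine h1.trans ?_
    -- T injects into Xset × Sset
    have hinj2 : Function.Injective (fun z : T =>
        ((⟨z.1 0, z.2.1⟩, ⟨z.1 1, z.2.2⟩) : Xset × Sset)) := by
      rintro ⟨z, hz⟩ ⟨w, hw⟩ h
      simp only [Prod.mk.injEq, Subtype.mk.injEq] at h
      refine Subtype.ext (funext fun i => ?_)
      fin_cases i
      · exact h.1
      · exact h.2
    have h2 : Nat.card T ≤ Nat.card (Xset × Sset) :=
      Nat.card_le_card_of_injective _ hinj2
    rw [Nat.card_prod] at h2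
    have hX : Nat.card Xset ≤ Xn := by
      rw [Nat.card_coe_set_eq, hXset]
      calc ((Nat.cast : ℕ → ZMod p) '' Iio Xn).ncard ≤ (Iio Xn : Set ℕ).ncard :=
            Set.ncard_image_le (Set.toFinite _)
        _ = Xn := by rw [← Finset.coe_Iio, Set.ncard_coe_finset, Nat.card_Iio]
    have hS : Nat.card Sset ≤ min p Bn := by
      refine le_min ?_ ?_
      · calc Nat.card Sset ≤ Nat.card (ZMod p) :=
              Nat.card_le_card_of_injective Subtype.val Subtype.val_injective
          _ = p := Nat.card_zmod p
      · rw [Nat.card_coe_set_eq, hSset]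
        calc ((Nat.cast : ℕ → ZMod p) '' Iio Bn).ncard ≤ (Iio Bn : Set ℕ).ncard :=
              Set.ncard_image_le (Set.toFinite _)
          _ = Bn := by rw [← Finset.coe_Iio, Set.ncard_coe_finset, Nat.card_Iio]
    exact h2.trans (Nat.mul_le_mul hX hS)

lemma ceil_facts {p : ℕ} (hp : 2 ≤ p) {x : ℝ} (hx0 : 0 ≤ x) (hx1 : x ≤ 1) :
    1 ≤ ⌈(p:ℝ)^x⌉₊ ∧ ⌈(p:ℝ)^x⌉₊ ≤ p ∧ ((⌈(p:ℝ)^x⌉₊:ℝ) ≤ (p:ℝ)^x + 1) ∧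
      ((p:ℝ)^x ≤ (⌈(p:ℝ)^x⌉₊:ℝ)) := by
  have hP : (1:ℝ) ≤ p := by exact_mod_cast le_trans one_le_two hp
  have hpos : (0:ℝ) < (p:ℝ)^x := Real.rpow_pos_of_pos (by linarith) x
  refine ⟨Nat.one_le_ceil_iff.mpr hpos, ?_, (Nat.ceil_lt_add_one hpos.le).le, Nat.le_ceil _⟩
  rw [Nat.ceil_le]
  calc (p:ℝ)^x ≤ (p:ℝ)^(1:ℝ) := Real.rpow_le_rpow_of_exponent_le hP hx1
    _ = p := Real.rpow_one _

lemma build (s t μ γ : ℝ) (hs0 : 0 < s) (hs1 : s ≤ 1) (hμ0 : 0 ≤ μ) (hμ1 : μ ≤ 1)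
    (hγ0 : 0 ≤ γ) (hγ1 : γ ≤ 1) (hsum : μ + γ = t) (p : ℕ) (hp : p.Prime) :
    ∃ (𝓛 : Set (AffineSubspace (ZMod p) (Fin 2 → ZMod p)))
      (Y : AffineSubspace (ZMod p) (Fin 2 → ZMod p) → Set (Fin 2 → ZMod p)),
      (∀ L ∈ 𝓛, (L : Set (Fin 2 → ZMod p)).Nonempty ∧
          Module.finrank (ZMod p) L.direction = 1) ∧
      (1 / 2 * (p : ℝ) ^ t ≤ Nat.card 𝓛) ∧
      (∀ L ∈ 𝓛, Y L ⊆ (L : Set (Fin 2 → ZMod p)) ∧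
          1 / 2 * (p : ℝ) ^ s ≤ Nat.card (Y L)) ∧
      ((Nat.card (⋃ L ∈ 𝓛, Y L) : ℝ) ≤
        (⌈(p:ℝ)^s⌉₊ : ℝ) *
          min (p:ℝ) (((⌈(p:ℝ)^μ⌉₊:ℝ) - 1) * ((⌈(p:ℝ)^s⌉₊:ℝ) - 1) + (⌈(p:ℝ)^γ⌉₊:ℝ))) := by
  have hp2 : 2 ≤ p := hp.two_le
  obtain ⟨hM1, hMp, hMle, hMge⟩ := ceil_facts hp2 hμ0 hμ1
  obtain ⟨hC1, hCp, hCle, hCge⟩ := ceil_facts hp2 hγ0 hγ1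
  obtain ⟨hX1, hXp, hXle, hXge⟩ := ceil_facts hp2 hs0.le hs1
  obtain ⟨𝓛, Y, hlines, hcard, hY, hE⟩ :=
    key p hp ⌈(p:ℝ)^μ⌉₊ ⌈(p:ℝ)^γ⌉₊ ⌈(p:ℝ)^s⌉₊ hM1 hMp hC1 hCp hX1 hXp
  have hPpos : (0:ℝ) < p := by positivity
  refine ⟨𝓛, Y, hlines, ?_, ?_, ?_⟩
  · calc 1 / 2 * (p:ℝ)^t ≤ (p:ℝ)^t := by
          have := Real.rpow_pos_of_pos hPpos t; linarith
      _ = (p:ℝ)^μ * (p:ℝ)^γ := by rw [← Real.rpow_add hPpos, hsum]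
      _ ≤ (⌈(p:ℝ)^μ⌉₊:ℝ) * (⌈(p:ℝ)^γ⌉₊:ℝ) := by
          apply mul_le_mul hMge hCge (Real.rpow_pos_of_pos hPpos γ).le
          positivity
      _ = ((⌈(p:ℝ)^μ⌉₊ * ⌈(p:ℝ)^γ⌉₊ : ℕ) : ℝ) := by push_cast; ring
      _ ≤ Nat.card 𝓛 := by exact_mod_cast hcard
  · intro L hL
    refine ⟨(hY L hL).1, ?_⟩
    calc 1 / 2 * (p:ℝ)^s ≤ (p:ℝ)^s := by
          have := Real.rpow_pos_of_pos hPpos s; linarith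
      _ ≤ (⌈(p:ℝ)^s⌉₊:ℝ) := hXge
      _ ≤ Nat.card (Y L) := by exact_mod_cast (hY L hL).2
  · calc (Nat.card (⋃ L ∈ 𝓛, Y L) : ℝ)
        ≤ ((⌈(p:ℝ)^s⌉₊ * min p ((⌈(p:ℝ)^μ⌉₊ - 1) * (⌈(p:ℝ)^s⌉₊ - 1) + ⌈(p:ℝ)^γ⌉₊) : ℕ) : ℝ) := by
          exact_mod_cast hE
      _ = (⌈(p:ℝ)^s⌉₊ : ℝ) *
          min (p:ℝ) (((⌈(p:ℝ)^μ⌉₊:ℝ) - 1) * ((⌈(p:ℝ)^s⌉₊:ℝ) - 1) + (⌈(p:ℝ)^γ⌉₊:ℝ)) := by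
          push_cast [Nat.cast_min, Nat.cast_sub hM1, Nat.cast_sub hX1]
          ring_nf


set_option maxHeartbeats 1000000 in
/-- For every `s ∈ (0,1]`, `t ∈ [0,2]` there is a constant `C` (independent
of `p`) such that for every prime `p` there exist a family `𝓛` of lines of `F_p^2` with
`#𝓛 ≥ (1/2)p^t` and subsets `Y L ⊆ L` with `#(Y L) ≥ (1/2)p^s`, whose union `E` satisfies
`#E ≤ C·p^(min (s+t) (min ((3/2)s + (1/2)t) (s+1)))`. -/
theorem stmt_5 (s t : ℝ) (hs0 : 0 < s) (hs1 : s ≤ 1) (ht0 : 0 ≤ t) (ht2 : t ≤ 2) :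
    ∃ C : ℝ, 0 < C ∧ ∀ p : ℕ, p.Prime →
      ∃ (𝓛 : Set (AffineSubspace (ZMod p) (Fin 2 → ZMod p)))
        (Y : AffineSubspace (ZMod p) (Fin 2 → ZMod p) → Set (Fin 2 → ZMod p)),
        (∀ L ∈ 𝓛, (L : Set (Fin 2 → ZMod p)).Nonempty ∧
            Module.finrank (ZMod p) L.direction = 1) ∧
        (1 / 2 * (p : ℝ) ^ t ≤ Nat.card 𝓛) ∧
        (∀ L ∈ 𝓛, Y L ⊆ (L : Set (Fin 2 → ZMod p)) ∧
            1 / 2 * (p : ℝ) ^ s ≤ Nat.card (Y L)) ∧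
        ((Nat.card (⋃ L ∈ 𝓛, Y L) : ℝ) ≤
          C * (p : ℝ) ^ (min (s + t) (min (3 / 2 * s + 1 / 2 * t) (s + 1)))) := by
  refine ⟨12, by norm_num, fun p hp => ?_⟩
  have hp2 : 2 ≤ p := hp.two_le
  have hP1 : (1:ℝ) ≤ p := by exact_mod_cast le_trans one_le_two hp2
  have hPpos : (0:ℝ) < p := by linarith
  set e := min (s + t) (min (3 / 2 * s + 1 / 2 * t) (s + 1)) with he
  have hepos : (0:ℝ) < (p:ℝ)^e := Real.rpow_pos_of_pos hPpos e
  have hspos : (0:ℝ) < (p:ℝ)^s := Real.rpow_pos_of_pos hPpos s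
  have hone : ∀ x : ℝ, 0 ≤ x → (1:ℝ) ≤ (p:ℝ)^x := fun x hx => by
    calc (1:ℝ) = (p:ℝ)^(0:ℝ) := (Real.rpow_zero _).symm
      _ ≤ (p:ℝ)^x := Real.rpow_le_rpow_of_exponent_le hP1 hx
  obtain ⟨hX1, hXp, hXle, hXge⟩ := ceil_facts hp2 hs0.le hs1
  have hXcast : (1:ℝ) ≤ (⌈(p:ℝ)^s⌉₊:ℝ) := by exact_mod_cast hX1
  rcases le_total t s with hts | hst
  · -- Case A : t ≤ s, e = s + t, μ = 0, γ = t
    have ht1 : t ≤ 1 := le_trans hts hs1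
    have he' : e = s + t := by
      rw [he]; exact min_eq_left (le_min (by linarith) (by linarith))
    obtain ⟨𝓛, Y, h1, h2, h3, h4⟩ :=
      build s t 0 t hs0 hs1 le_rfl zero_le_one ht0 ht1 (by ring) p hp
    refine ⟨𝓛, Y, h1, h2, h3, ?_⟩
    obtain ⟨hC1, hCp, hCle, hCge⟩ := ceil_facts hp2 ht0 ht1
    have htpos : (0:ℝ) < (p:ℝ)^t := Real.rpow_pos_of_pos hPpos t
    have hM : (⌈(p:ℝ)^(0:ℝ)⌉₊:ℝ) = 1 := by rw [Real.rpow_zero]; simp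
    refine h4.trans ?_
    have hBle : min (p:ℝ) (((⌈(p:ℝ)^(0:ℝ)⌉₊:ℝ) - 1) * ((⌈(p:ℝ)^s⌉₊:ℝ) - 1) + (⌈(p:ℝ)^t⌉₊:ℝ))
        ≤ 2 * (p:ℝ)^t := by
      refine (min_le_right _ _).trans ?_
      rw [hM]
      nlinarith [hone t ht0]
    have hBnn : (0:ℝ) ≤ min (p:ℝ) (((⌈(p:ℝ)^(0:ℝ)⌉₊:ℝ) - 1) * ((⌈(p:ℝ)^s⌉₊:ℝ) - 1) +
        (⌈(p:ℝ)^t⌉₊:ℝ)) := le_min hPpos.le (by rw [hM]; nlinarith [hone t ht0])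
    calc (⌈(p:ℝ)^s⌉₊:ℝ) * min (p:ℝ) _ ≤ (2 * (p:ℝ)^s) * (2 * (p:ℝ)^t) := by
          apply mul_le_mul (by nlinarith [hone s hs0.le]) hBle hBnn (by linarith)
      _ = 4 * (p:ℝ)^(s+t) := by rw [Real.rpow_add hPpos]; ring
      _ ≤ 12 * (p:ℝ)^e := by rw [he']; nlinarith [Real.rpow_pos_of_pos hPpos (s+t)]
  rcases le_total (s + t) 2 with hst2 | h2st
  · -- Case B : s ≤ t, s + t ≤ 2, e = 3/2 s + 1/2 t, μ = (t-s)/2, γ = (s+t)/2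
    have he' : e = 3/2*s + 1/2*t := by
      rw [he, min_eq_left (by linarith : 3/2*s + 1/2*t ≤ s + 1)]
      exact min_eq_right (by linarith)
    obtain ⟨𝓛, Y, h1, h2, h3, h4⟩ :=
      build s t ((t-s)/2) ((s+t)/2) hs0 hs1 (by linarith) (by linarith) (by linarith)
        (by linarith) (by ring) p hp
    refine ⟨𝓛, Y, h1, h2, h3, ?_⟩
    obtain ⟨hM1, hMp, hMle, hMge⟩ := ceil_facts hp2 (by linarith : (0:ℝ) ≤ (t-s)/2) (by linarith)
    obtain ⟨hC1, hCp, hCle, hCge⟩ := ceil_facts hp2 (by linarith : (0:ℝ) ≤ (s+t)/2) (by linarith)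
    have hMcast : (1:ℝ) ≤ (⌈(p:ℝ)^((t-s)/2)⌉₊:ℝ) := by exact_mod_cast hM1
    have hmul : (p:ℝ)^((t-s)/2) * (p:ℝ)^s = (p:ℝ)^((s+t)/2) := by
      rw [← Real.rpow_add hPpos]; congr 1; ring
    have hγpos : (0:ℝ) < (p:ℝ)^((s+t)/2) := Real.rpow_pos_of_pos hPpos _
    refine h4.trans ?_
    have hBle : min (p:ℝ) (((⌈(p:ℝ)^((t-s)/2)⌉₊:ℝ) - 1) * ((⌈(p:ℝ)^s⌉₊:ℝ) - 1) +
        (⌈(p:ℝ)^((s+t)/2)⌉₊:ℝ)) ≤ 3 * (p:ℝ)^((s+t)/2) := by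
      refine (min_le_right _ _).trans ?_
      have h1' : ((⌈(p:ℝ)^((t-s)/2)⌉₊:ℝ) - 1) * ((⌈(p:ℝ)^s⌉₊:ℝ) - 1) ≤
          (p:ℝ)^((t-s)/2) * (p:ℝ)^s := by
        apply mul_le_mul (by linarith) (by linarith) (by linarith)
          (Real.rpow_pos_of_pos hPpos _).le
      rw [hmul] at h1'
      nlinarith [hone ((s+t)/2) (by linarith : (0:ℝ) ≤ (s+t)/2)]
    have hBnn : (0:ℝ) ≤ min (p:ℝ) (((⌈(p:ℝ)^((t-s)/2)⌉₊:ℝ) - 1) * ((⌈(p:ℝ)^s⌉₊:ℝ) - 1) +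
        (⌈(p:ℝ)^((s+t)/2)⌉₊:ℝ)) := by
      refine le_min hPpos.le ?_
      have : (0:ℝ) ≤ ((⌈(p:ℝ)^((t-s)/2)⌉₊:ℝ) - 1) * ((⌈(p:ℝ)^s⌉₊:ℝ) - 1) := by
        apply mul_nonneg <;> linarith
      have : (0:ℝ) < (⌈(p:ℝ)^((s+t)/2)⌉₊:ℝ) := by
        have := hCge; linarith
      linarith
    calc (⌈(p:ℝ)^s⌉₊:ℝ) * min (p:ℝ) _ ≤ (2 * (p:ℝ)^s) * (3 * (p:ℝ)^((s+t)/2)) := by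
          apply mul_le_mul (by nlinarith [hone s hs0.le]) hBle hBnn (by linarith)
      _ = 6 * (p:ℝ)^(s + (s+t)/2) := by rw [Real.rpow_add hPpos]; ring
      _ = 6 * (p:ℝ)^e := by rw [he']; congr 2; ring
      _ ≤ 12 * (p:ℝ)^e := by linarith
  · -- Case C : 2 ≤ s + t, e = s + 1, μ = t - 1, γ = 1
    have he' : e = s + 1 := by
      rw [he, min_eq_right (by linarith : s + 1 ≤ 3/2*s + 1/2*t)]
      exact min_eq_right (by linarith)
    obtain ⟨hM1, hMp, hMle, hMge⟩ :=
      ceil_facts hp2 (by linarith : (0:ℝ) ≤ t-1) (by linarith : t-1 ≤ 1)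
    obtain ⟨hC1, hCp, hCle, hCge⟩ := ceil_facts hp2 zero_le_one le_rfl
    have hMcast : (1:ℝ) ≤ (⌈(p:ℝ)^(t-1)⌉₊:ℝ) := by exact_mod_cast hM1
    have hCcast : (1:ℝ) ≤ (⌈(p:ℝ)^(1:ℝ)⌉₊:ℝ) := by exact_mod_cast hC1
    obtain ⟨𝓛, Y, h1, h2, h3, h4⟩ :=
      build s t (t-1) 1 hs0 hs1 (by linarith) (by linarith) zero_le_one le_rfl
        (by ring) p hp
    refine ⟨𝓛, Y, h1, h2, h3, ?_⟩
    refine h4.trans ?_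
    have hBnn : (0:ℝ) ≤ min (p:ℝ) (((⌈(p:ℝ)^(t-1)⌉₊:ℝ) - 1) * ((⌈(p:ℝ)^s⌉₊:ℝ) - 1) +
        (⌈(p:ℝ)^(1:ℝ)⌉₊:ℝ)) := by
      refine le_min hPpos.le ?_
      have h0 : (0:ℝ) ≤ ((⌈(p:ℝ)^(t-1)⌉₊:ℝ) - 1) * ((⌈(p:ℝ)^s⌉₊:ℝ) - 1) :=
        mul_nonneg (by linarith) (by linarith)
      exact add_nonneg h0 (le_trans zero_le_one hCcast)
    calc (⌈(p:ℝ)^s⌉₊:ℝ) * min (p:ℝ) (((⌈(p:ℝ)^(t-1)⌉₊:ℝ) - 1) * ((⌈(p:ℝ)^s⌉₊:ℝ) - 1) +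
          (⌈(p:ℝ)^(1:ℝ)⌉₊:ℝ)) ≤ (2 * (p:ℝ)^s) * (p:ℝ) := by
          apply mul_le_mul (by nlinarith [hone s hs0.le]) (min_le_left _ _) hBnn (by linarith)
      _ = 2 * (p:ℝ)^(s+1) := by
          rw [Real.rpow_add hPpos, Real.rpow_one]; ring
      _ ≤ 12 * (p:ℝ)^e := by rw [he']; nlinarith [Real.rpow_pos_of_pos hPpos (s+1)]
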